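/- Let H be a finite-dimensional real Hilbert space and X, Y linear subspaces with X ⊕ Y = H (direct sum). Let F : H → H be the oblique projection onto X along Y (i.e., F is linear, F² = F, range F = X, ker F = Y). Then F = P_X ((1 - P_Y) P_X)† (1 - P_Y), where P_X, P_Y are the orthogonal projections onto X and Y, and † denotes the Moore-Penrose inverse. -/

import Mathlib

/-- If `H` is a finite-dimensional real Hilbert space, `X ⊕ Y = H`,
and `F` is the oblique projection onto `X` along `Y` (`F² = F`, range `F = X`,
ker `F = Y`), then `F = P_X ((1 - P_Y) P_X)† (1 - P_Y)`, where `B` is the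
Moore-Penrose inverse of `A = (1 - P_Y) P_X`, characterized by the four Penrose
equations. -/
theorem stmt_0 {H : Type*} [NormedAddCommGroup H] [InnerProductSpace ℝ H]
    [FiniteDimensional ℝ H]
    (X Y : Submodule ℝ H) (hXY : IsCompl X Y)
    (F : H →L[ℝ] H)
    (hF2 : F * F = F)
    (hFran : LinearMap.range (F : H →ₗ[ℝ] H) = X)
    (hFker : LinearMap.ker (F : H →ₗ[ℝ] H) = Y)
    (PX PY A B : H →L[ℝ] H)
    (hPX : ∀ v, PX v = (Submodule.orthogonalProjectionOnto X v : H))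
    (hPY : ∀ v, PY v = (Submodule.orthogonalProjectionOnto Y v : H))
    (hA : A = (1 - PY) * PX)
    (h1 : A * B * A = A) (h2 : B * A * B = B)
    (h3 : ContinuousLinearMap.adjoint (A * B) = A * B)
    (h4 : ContinuousLinearMap.adjoint (B * A) = B * A) :
    F = PX * B * (1 - PY) := by
  -- basic facts about PX, PY
  have hPXfix : ∀ x ∈ X, PX x = x := fun x hx => by
    rw [hPX]; exact X.starProjection_eq_self_iff.2 hx
  have hPYfix : ∀ y ∈ Y, PY y = y := fun y hy => by
    rw [hPY]; exact Y.starProjection_eq_self_iff.2 hy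
  have hPYmem : ∀ v, PY v ∈ Y := fun v => by rw [hPY]; exact (Submodule.orthogonalProjectionOnto Y v).2
  -- A v = PX v - PY (PX v)
  have hAapp : ∀ v, A v = PX v - PY (PX v) := fun v => by
    simp [hA, ContinuousLinearMap.mul_apply, ContinuousLinearMap.sub_apply]
  -- kernel of A is Xᗮ
  have hAker : ∀ v, A v = 0 ↔ v ∈ Xᗮ := by
    intro v
    constructor
    · intro h
      rw [hAapp, sub_eq_zero] at h
      have hmem : PX v ∈ X ⊓ Y := ⟨by rw [hPX]; exact (Submodule.orthogonalProjectionOnto X v).2,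
        h ▸ hPYmem (PX v)⟩
      rw [hXY.inf_eq_bot, Submodule.mem_bot] at hmem
      have : Submodule.orthogonalProjectionOnto X v = 0 := Subtype.ext (by rw [← hPX]; exact hmem)
      exact Submodule.orthogonalProjectionOnto_eq_zero_iff.1 this
    · intro h
      have : PX v = 0 := by
        rw [hPX]
        exact congrArg Subtype.val (Submodule.orthogonalProjectionOnto_eq_zero_iff.2 h)
      rw [hAapp, this, map_zero, sub_zero]
  -- BA is symmetric
  have hBAsym : ∀ u w : H, (inner ℝ ((B * A) u) w : ℝ) = inner ℝ u ((B * A) w) := by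
    intro u w
    calc (inner ℝ ((B * A) u) w : ℝ) = inner ℝ (ContinuousLinearMap.adjoint (B * A) u) w := by rw [h4]
    _ = inner ℝ u ((B * A) w) := ContinuousLinearMap.adjoint_inner_left _ _ _
  -- AB is symmetric
  have hABsym : ∀ u w : H, (inner ℝ ((A * B) u) w : ℝ) = inner ℝ u ((A * B) w) := by
    intro u w
    calc (inner ℝ ((A * B) u) w : ℝ) = inner ℝ (ContinuousLinearMap.adjoint (A * B) u) w := by rw [h3]
    _ = inner ℝ u ((A * B) w) := ContinuousLinearMap.adjoint_inner_left _ _ _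
  -- B * A = PX pointwise
  have hBA : ∀ v, (B * A) v = PX v := by
    intro v
    have hmem : (B * A) v ∈ X := by
      rw [← X.orthogonal_orthogonal]
      intro w hw
      have hAw : A w = 0 := (hAker w).2 hw
      have : (B * A) w = 0 := by
        simp [ContinuousLinearMap.mul_apply, hAw]
      rw [real_inner_comm, hBAsym, this, inner_zero_right]
    have hsub : v - (B * A) v ∈ Xᗮ := by
      apply (hAker _).1
      have : A (v - (B * A) v) = A v - (A * B * A) v := by
        simp [ContinuousLinearMap.mul_apply, map_sub]
      rw [this, h1, sub_self]
    rw [hPX]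
    exact (Submodule.eq_starProjection_of_mem_orthogonal hmem hsub).symm
  -- (A * B) y = 0 for y ∈ Y
  have hABY : ∀ y ∈ Y, (A * B) y = 0 := by
    intro y hy
    have hin : ∀ u : H, (inner ℝ y ((A * B) u) : ℝ) = 0 := by
      intro u
      have : (A * B) u = PX (B u) - PY (PX (B u)) := by
        simp [ContinuousLinearMap.mul_apply, hAapp]
      rw [this]
      have : PX (B u) - PY (PX (B u)) ∈ Yᗮ := by
        rw [hPY]
        exact Submodule.sub_starProjection_mem_orthogonal (K := Y) _
      exact this y hy
    have : (inner ℝ ((A * B) y) ((A * B) y) : ℝ) = 0 := by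
      rw [hABsym]; exact hin _
    exact inner_self_eq_zero.1 this
  -- B y = 0 for y ∈ Y
  have hBY : ∀ y ∈ Y, B y = 0 := by
    intro y hy
    have : B y = (B * A * B) y := by rw [h2]
    rw [this]
    have : (B * A * B) y = B ((A * B) y) := by
      simp [ContinuousLinearMap.mul_apply]
    rw [this, hABY y hy, map_zero]
  -- B x = x for x ∈ X
  have hBX : ∀ x ∈ X, B x = x := by
    intro x hx
    have hAx : A x = x - PY x := by rw [hAapp, hPXfix x hx]
    have : B x = B (x - PY x) := by
      rw [map_sub, hBY _ (hPYmem x), sub_zero]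
    rw [this, ← hAx, ← ContinuousLinearMap.mul_apply, hBA, hPXfix x hx]
  -- conclude
  ext v
  have hv : v ∈ X ⊔ Y := by rw [hXY.sup_eq_top]; trivial
  obtain ⟨x, hx, y, hy, rfl⟩ := Submodule.mem_sup.1 hv
  -- F (x + y) = x
  have hFy : F y = 0 := by
    have : y ∈ LinearMap.ker (F : H →ₗ[ℝ] H) := by rw [hFker]; exact hy
    exact this
  have hFx : F x = x := by
    have : x ∈ LinearMap.range (F : H →ₗ[ℝ] H) := by rw [hFran]; exact hx
    obtain ⟨u, hu⟩ := this
    calc F x = F (F u) := by rw [← hu]; rfl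
    _ = (F * F) u := rfl
    _ = F u := by rw [hF2]
    _ = x := hu
  have hL : F (x + y) = x := by rw [map_add, hFx, hFy, add_zero]
  -- RHS (x + y) = x
  have hR : (PX * B * (1 - PY)) (x + y) = x := by
    have h1PY : (1 - PY) (x + y) = x + y - PY (x + y) := by
      simp [ContinuousLinearMap.sub_apply]
    have hBv : B ((1 - PY) (x + y)) = x := by
      rw [h1PY, map_sub, hBY _ (hPYmem (x + y)), sub_zero, map_add,
        hBX x hx, hBY y hy, add_zero]
    calc (PX * B * (1 - PY)) (x + y) = PX (B ((1 - PY) (x + y))) := rfl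
    _ = PX x := by rw [hBv]
    _ = x := hPXfix x hx
  rw [hL, hR]
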